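/- arXiv:2105.13538 — 7 statements merged into one kernel-verified Lean document; each statement's English description precedes it below -/
import Mathlib

section
/- Let V be a complex vector space, a a Hermitian positive definite sesquilinear form on V, N ≥ 1, and u_0, u_1, …, u_N ∈ V. Let M ≥ 1 be a natural number and, for each i ∈ {1, …, N}, let S(i) ⊆ {1, …, N} be a set with i ∈ S(i), with symmetric membership (j ∈ S(i) if and only if i ∈ S(j)), and with |S(i)| ≤ M. Assume a(u_i, u_j) = 0 whenever i, j ∈ {1, …, N} and j ∉ S(i). Then a(Σ_{i=0}^{N} u_i, Σ_{i=0}^{N} u_i) ≤ 2M · (Σ_{i=1}^{N} a(u_i, u_i) + a(u_0, u_0)). -/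
open scoped ComplexConjugate

/-- A Hermitian positive definite sesquilinear form on a complex vector space:
linear in the first argument, Hermitian symmetric (hence conjugate-linear in the
second argument), and with `(a v v)` real and strictly positive for `v ≠ 0`. -/
def IsHermitianPD {V : Type*} [AddCommGroup V] [Module ℂ V] (a : V → V → ℂ) : Prop :=
  (∀ u v w : V, a (u + v) w = a u w + a v w) ∧
  (∀ (c : ℂ) (u v : V), a (c • u) v = c * a u v) ∧
  (∀ u v : V, a u v = conj (a v u)) ∧
  (∀ v : V, v ≠ 0 → 0 < (a v v).re)

section Aux

variable {V : Type*} [AddCommGroup V] [Module ℂ V] (a : V → V → ℂ) (ha : IsHermitianPD a)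
include ha

lemma aux_zero_left (z : V) : a 0 z = 0 := by
  have := ha.2.1 0 0 z
  simpa using this

lemma aux_add_right (z x y : V) : a z (x + y) = a z x + a z y := by
  rw [ha.2.2.1 z (x+y), ha.1, map_add, ← ha.2.2.1, ← ha.2.2.1]

lemma aux_neg_left (x z : V) : a (-x) z = - a x z := by
  have := ha.2.1 (-1) x z
  simpa using this

lemma aux_neg_right (x z : V) : a z (-x) = - a z x := by
  rw [ha.2.2.1 z (-x), aux_neg_left a ha, map_neg, ← ha.2.2.1]

lemma aux_nonneg (v : V) : 0 ≤ (a v v).re := by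
  by_cases h : v = 0
  · simp [h, aux_zero_left a ha]
  · exact (ha.2.2.2 v h).le

lemma aux_re_symm (x y : V) : (a y x).re = (a x y).re := by
  rw [ha.2.2.1 y x]; simp

lemma aux_expand (x y : V) :
    (a (x + y) (x + y)).re = (a x x).re + (a y y).re + 2 * (a x y).re := by
  rw [ha.1, aux_add_right a ha, aux_add_right a ha]
  simp only [Complex.add_re]
  rw [aux_re_symm a ha x y]
  ring

lemma aux_cs (x y : V) : 2 * (a x y).re ≤ (a x x).re + (a y y).re := by
  have h := aux_nonneg a ha (x + (-y))
  have e1 : a x (-y) = - a x y := aux_neg_right a ha y x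
  have e2 : a (-y) (-y) = a y y := by
    rw [aux_neg_left a ha, aux_neg_right a ha, neg_neg]
  rw [aux_expand a ha, e1, e2, Complex.neg_re] at h
  linarith

lemma aux_sum_left {ι : Type*} (s : Finset ι) (f : ι → V) (z : V) :
    a (∑ i ∈ s, f i) z = ∑ i ∈ s, a (f i) z := by
  classical
  induction s using Finset.induction with
  | empty => simp [aux_zero_left a ha]
  | insert x s h ih => rw [Finset.sum_insert h, ha.1, ih, Finset.sum_insert h]

lemma aux_sum_right {ι : Type*} (s : Finset ι) (f : ι → V) (z : V) :
    a z (∑ i ∈ s, f i) = ∑ i ∈ s, a z (f i) := by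
  rw [ha.2.2.1, aux_sum_left a ha, map_sum]
  simp only [← ha.2.2.1]

end Aux

/-- Lemma 2.3 of the paper: the assembled decomposition is bounded,
`|Σ_{i=0}^N u_i|_a² ≤ 2M (Σ_{i=1}^N |u_i|_a² + |u_0|_a²)`, where local pieces
belonging to non-adjacent index sets are `a`-orthogonal. -/
theorem assembled_decomposition_bound
    {V : Type*} [AddCommGroup V] [Module ℂ V]
    (a : V → V → ℂ) (ha : IsHermitianPD a)
    (N : ℕ) (hN : 1 ≤ N)
    (u : Fin (N + 1) → V)
    (M : ℕ) (hM : 1 ≤ M)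
    (S : Fin N → Finset (Fin N))
    (hSmem : ∀ i : Fin N, i ∈ S i)
    (hSsymm : ∀ i j : Fin N, j ∈ S i ↔ i ∈ S j)
    (hScard : ∀ i : Fin N, (S i).card ≤ M)
    (horth : ∀ i j : Fin N, j ∉ S i → a (u i.succ) (u j.succ) = 0) :
    (a (∑ i, u i) (∑ i, u i)).re ≤
      2 * M * ((∑ i : Fin N, (a (u i.succ) (u i.succ)).re) + (a (u 0) (u 0)).re) := by
  classical
  set v : Fin N → V := fun i => u i.succ with hv
  set w : V := ∑ i, v i with hw
  set B : Fin N → ℝ := fun i => (a (v i) (v i)).re with hB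
  -- split off u 0
  have hsplit : (∑ i, u i) = u 0 + w := by
    rw [Fin.sum_univ_succ]
  -- bound |w|²
  have hww : (a w w).re = ∑ i : Fin N, ∑ j ∈ S i, (a (v i) (v j)).re := by
    rw [hw, aux_sum_left a ha, Complex.re_sum]
    refine Finset.sum_congr rfl fun i _ => ?_
    rw [aux_sum_right a ha, Complex.re_sum]
    symm
    refine Finset.sum_subset (Finset.subset_univ _) fun j _ hj => ?_
    rw [horth i j hj]; simp
  have hstep : (a w w).re ≤ ∑ i : Fin N, ∑ j ∈ S i, ((B i + B j) / 2) := by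
    rw [hww]
    refine Finset.sum_le_sum fun i _ => Finset.sum_le_sum fun j _ => ?_
    have := aux_cs a ha (v i) (v j)
    simp only [hB]
    linarith
  have hsplit2 : ∑ i : Fin N, ∑ j ∈ S i, ((B i + B j) / 2)
      = (∑ i : Fin N, (S i).card * B i + ∑ i : Fin N, ∑ j ∈ S i, B j) / 2 := by
    have hi : ∀ i : Fin N, ∑ j ∈ S i, ((B i + B j) / 2)
        = (((S i).card : ℝ) * B i + ∑ j ∈ S i, B j) / 2 := by
      intro i
      rw [← Finset.sum_div, Finset.sum_add_distrib, Finset.sum_const, nsmul_eq_mul]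
    rw [Finset.sum_congr rfl fun i _ => hi i, ← Finset.sum_div, Finset.sum_add_distrib]
  have hswap : ∑ i : Fin N, ∑ j ∈ S i, B j = ∑ j : Fin N, (S j).card * B j := by
    rw [Finset.sum_comm' (s := Finset.univ) (t := S) (t' := Finset.univ) (s' := S)
      (by intro x y; simp [hSsymm x y])]
    refine Finset.sum_congr rfl fun j _ => ?_
    rw [Finset.sum_const, nsmul_eq_mul]
  have hBnn : ∀ i, 0 ≤ B i := fun i => aux_nonneg a ha (v i)
  have hcardB : ∑ i : Fin N, ((S i).card : ℝ) * B i ≤ M * ∑ i : Fin N, B i := by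
    rw [Finset.mul_sum]
    refine Finset.sum_le_sum fun i _ => ?_
    exact mul_le_mul_of_nonneg_right (by exact_mod_cast hScard i) (hBnn i)
  have hwbound : (a w w).re ≤ M * ∑ i : Fin N, B i := by
    calc (a w w).re ≤ ∑ i : Fin N, ∑ j ∈ S i, ((B i + B j) / 2) := hstep
    _ = (∑ i : Fin N, (S i).card * B i + ∑ i : Fin N, ∑ j ∈ S i, B j) / 2 := hsplit2
    _ = ∑ i : Fin N, ((S i).card : ℝ) * B i := by rw [hswap]; ring
    _ ≤ M * ∑ i : Fin N, B i := hcardB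
  -- combine
  have hfull : (a (∑ i, u i) (∑ i, u i)).re ≤ 2 * (a (u 0) (u 0)).re + 2 * (a w w).re := by
    rw [hsplit, aux_expand a ha]
    have := aux_cs a ha (u 0) w
    linarith
  have h0nn : 0 ≤ (a (u 0) (u 0)).re := aux_nonneg a ha (u 0)
  have hM' : (1 : ℝ) ≤ M := by exact_mod_cast hM
  have hBsum : (∑ i : Fin N, (a (u i.succ) (u i.succ)).re) = ∑ i : Fin N, B i := rfl
  rw [hBsum]
  nlinarith [hwbound, hfull, Finset.sum_nonneg fun i (_ : i ∈ Finset.univ) => hBnn i]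
end

section
/- Let V be a finite-dimensional complex vector space, a a Hermitian positive definite sesquilinear form on V, N ≥ 1, and for i = 1, …, N let a_i and s_i be Hermitian positive semidefinite sesquilinear forms on V with Σ_{i=1}^{N} a_i(v, v) ≤ a(v, v) for all v ∈ V. Let V_0 ⊆ V be a subspace, Λ > 1 and C ≥ 1 real constants, and T_1, …, T_N : V → V linear maps such that Σ_{i=1}^{N} a(T_i v, T_i v) ≤ C · Σ_{i=1}^{N} (a_i(v, v) + s_i(v, v)) for all v ∈ V. Assume moreover that every w in the a-orthogonal complement of V_0 satisfies s_i(w, w) ≤ Λ · a_i(w, w) for each i = 1, …, N. Then for every u ∈ V, if u_0 denotes the a-orthogonal projection of u onto V_0 and u_i := T_i(u − u_0) for i = 1, …, N, one has Σ_{i=1}^{N} a(u_i, u_i) + a(u_0, u_0) ≤ C · (1 + Λ) · a(u, u). -/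
open scoped ComplexConjugate

/-- A Hermitian positive semidefinite sesquilinear form. -/
def IsHermitianPSD {V : Type*} [AddCommGroup V] [Module ℂ V] (a : V → V → ℂ) : Prop :=
  (∀ u v w : V, a (u + v) w = a u w + a v w) ∧
  (∀ (c : ℂ) (u v : V), a (c • u) v = c * a u v) ∧
  (∀ u v : V, a u v = conj (a v u)) ∧
  (∀ v : V, 0 ≤ (a v v).re)

/-- Lemma 2.6 of the paper: stability of the two-level decomposition
`u = u_0 + Σ_{i=1}^N u_i` with `u_0` the `a`-orthogonal projection onto the coarse
space `V_0` and `u_i = T_i (u - u_0)`. -/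
theorem two_level_decomposition_stability
    {V : Type*} [AddCommGroup V] [Module ℂ V] [FiniteDimensional ℂ V]
    (a : V → V → ℂ) (ha : IsHermitianPD a)
    (N : ℕ) (hN : 1 ≤ N)
    (aloc sloc : Fin N → V → V → ℂ)
    (haloc : ∀ i, IsHermitianPSD (aloc i))
    (hsloc : ∀ i, IsHermitianPSD (sloc i))
    (hsum : ∀ v : V, ∑ i, (aloc i v v).re ≤ (a v v).re)
    (V₀ : Submodule ℂ V)
    (Lam C : ℝ) (hLam : 1 < Lam) (hC : 1 ≤ C)
    (T : Fin N → V →ₗ[ℂ] V)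
    (hT : ∀ v : V, ∑ i, (a (T i v) (T i v)).re ≤
      C * ∑ i, ((aloc i v v).re + (sloc i v v).re))
    (hcompl : ∀ w : V, (∀ v ∈ V₀, a w v = 0) →
      ∀ i : Fin N, (sloc i w w).re ≤ Lam * (aloc i w w).re) :
    ∀ u u₀ : V, u₀ ∈ V₀ → (∀ v ∈ V₀, a (u - u₀) v = 0) →
      (∑ i, (a (T i (u - u₀)) (T i (u - u₀))).re) + (a u₀ u₀).re ≤
        C * (1 + Lam) * (a u u).re := by
  obtain ⟨ha1, ha2, ha3, ha4⟩ := ha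
  intro u u₀ hu₀ horth
  set w := u - u₀ with hw
  -- zero vector gives 0
  have hzero : ∀ v : V, a 0 v = 0 := by
    intro v
    have := ha2 0 v v
    simpa using this
  -- nonnegativity of a
  have hnn : ∀ v : V, 0 ≤ (a v v).re := by
    intro v
    by_cases h : v = 0
    · subst h; simp [hzero]
    · exact le_of_lt (ha4 v h)
  -- additivity in second argument
  have ha1' : ∀ x y z : V, a x (y + z) = a x y + a x z := by
    intro x y z
    rw [ha3 x (y + z), ha1, map_add, ← ha3, ← ha3]
  -- Pythagoras
  have h0 : a w u₀ = 0 := horth u₀ hu₀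
  have h0' : a u₀ w = 0 := by rw [ha3, h0]; simp
  have hdecomp : u = w + u₀ := by rw [hw]; abel
  have hpyth : a u u = a w w + a u₀ u₀ := by
    conv_lhs => rw [hdecomp]
    rw [ha1, ha1', ha1', h0, h0']
    ring
  -- bound the sum
  have hS : ∑ i, (a (T i w) (T i w)).re ≤ C * ((1 + Lam) * (a w w).re) := by
    calc ∑ i, (a (T i w) (T i w)).re
        ≤ C * ∑ i, ((aloc i w w).re + (sloc i w w).re) := hT w
      _ ≤ C * ((1 + Lam) * (a w w).re) := by
          apply mul_le_mul_of_nonneg_left _ (by linarith : (0:ℝ) ≤ C)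
          calc ∑ i, ((aloc i w w).re + (sloc i w w).re)
              ≤ ∑ i, (1 + Lam) * (aloc i w w).re := by
                apply Finset.sum_le_sum
                intro i _
                have := hcompl w horth i
                have hann := (haloc i).2.2.2 w
                nlinarith
            _ = (1 + Lam) * ∑ i, (aloc i w w).re := by
                rw [Finset.mul_sum]
            _ ≤ (1 + Lam) * (a w w).re := by
                apply mul_le_mul_of_nonneg_left (hsum w)
                linarith
  have hCL : 1 ≤ C * (1 + Lam) := by nlinarith
  have hnn0 : 0 ≤ (a u₀ u₀).re := hnn u₀
  have hre : (a u u).re = (a w w).re + (a u₀ u₀).re := by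
    rw [hpyth, Complex.add_re]
  nlinarith [hnn w]
end

section
/- With the generalized eigenbasis setup and π the s-orthogonal projection onto span{φ_1, …, φ_l}, every v ∈ V satisfies s(v, v) ≤ 2Λ · a(v, v) + 3 · s(πv, πv). -/
open scoped ComplexConjugate

private lemma sesq_expand {V : Type*} [AddCommGroup V] [Module ℂ V] (s : V → V → ℂ)
    (hadd : ∀ u v w : V, s (u + v) w = s u w + s v w)
    (hsmul : ∀ (c : ℂ) (u v : V), s (c • u) v = c * s u v)
    {ι : Type*} [DecidableEq ι] (t : Finset ι) (c : ι → ℂ) (g : ι → V) (w : V) :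
    s (∑ j ∈ t, c j • g j) w = ∑ j ∈ t, c j * s (g j) w := by
  induction t using Finset.induction with
  | empty =>
    have h0 : s 0 w = 0 := by
      have := hsmul 0 0 w
      simpa using this
    simpa using h0
  | insert _ _ hj ih =>
    rw [Finset.sum_insert hj, hadd, hsmul, ih, Finset.sum_insert hj]


/-- Lemma 2.9 of the paper: `‖v‖_s² ≤ 2Λ |v|_a² + 3 ‖πv‖_s²` where `π` is the
`s`-orthogonal projection onto the span of the low-index eigenfunctions. -/
theorem s_norm_le_two_Lambda_a_add_three_proj
    {V : Type*} [AddCommGroup V] [Module ℂ V] [FiniteDimensional ℂ V]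
    (n : ℕ) (hn : 1 ≤ n) (hdim : Module.finrank ℂ V = n)
    (a s : V → V → ℂ) (ha : IsHermitianPD a) (hs : IsHermitianPD s)
    (φ : Fin n → V) (lam : Fin n → ℝ)
    (hindep : LinearIndependent ℂ φ)
    (hspan : Submodule.span ℂ (Set.range φ) = ⊤)
    (hmono : ∀ j k : Fin n, j ≤ k → lam k ≤ lam j)
    (hpos : ∀ j : Fin n, 0 < lam j)
    (heig : ∀ (j : Fin n) (w : V), s (φ j) w = (lam j : ℂ) * a (φ j) w)
    (horth : ∀ j k : Fin n, j ≠ k → s (φ j) (φ k) = 0 ∧ a (φ j) (φ k) = 0)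
    (hnorm : ∀ j : Fin n, s (φ j) (φ j) = 1)
    (Lam : ℝ) (hLam : 1 < Lam)
    (l : ℕ) (hln : l ≤ n)
    (hge : ∀ j : Fin n, (j : ℕ) < l → Lam ≤ lam j)
    (hlt : ∀ j : Fin n, l ≤ (j : ℕ) → lam j < Lam)
    (π : V → V)
    (hπmem : ∀ v : V, π v ∈ Submodule.span ℂ (φ '' {j : Fin n | (j : ℕ) < l}))
    (hπorth : ∀ (v : V) (j : Fin n), (j : ℕ) < l → s (v - π v) (φ j) = 0) :
    ∀ v : V, (s v v).re ≤ 2 * Lam * (a v v).re + 3 * (s (π v) (π v)).re := by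
  intro v
  obtain ⟨hs_add, hs_smul, hs_conj, _⟩ := hs
  obtain ⟨ha_add, ha_smul, ha_conj, _⟩ := ha
  -- basis
  let B : Module.Basis (Fin n) ℂ V := Module.Basis.mk hindep (by rw [hspan])
  have hB : ⇑B = φ := Module.Basis.coe_mk hindep _
  -- expansion: s u w = ∑ repr u j * s (φ j) w
  have hexp : ∀ u w : V, s u w = ∑ j, B.repr u j * s (φ j) w := by
    intro u w
    conv_lhs => rw [← B.sum_repr u]
    rw [hB, sesq_expand s hs_add hs_smul]
  have haexp : ∀ u w : V, a u w = ∑ j, B.repr u j * a (φ j) w := by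
    intro u w
    conv_lhs => rw [← B.sum_repr u]
    rw [hB, sesq_expand a ha_add ha_smul]
  -- s u (φ j) = repr u j
  have hco : ∀ (u : V) (j : Fin n), s u (φ j) = B.repr u j := by
    intro u j
    rw [hexp]
    rw [Finset.sum_eq_single j]
    · rw [hnorm j, mul_one]
    · intro k _ hk
      rw [(horth k j hk).1, mul_zero]
    · simp
  -- a (φ j) (φ j) = (lam j)⁻¹
  have haφ : ∀ j : Fin n, a (φ j) (φ j) = ((lam j : ℝ)⁻¹ : ℝ) := by
    intro j
    have h1 := heig j (φ j)
    rw [hnorm j] at h1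
    have hne : (lam j : ℂ) ≠ 0 := by
      exact_mod_cast (hpos j).ne'
    push_cast
    calc a (φ j) (φ j) = (lam j : ℂ)⁻¹ * ((lam j : ℂ) * a (φ j) (φ j)) := by
          rw [← mul_assoc, inv_mul_cancel₀ hne, one_mul]
      _ = (lam j : ℂ)⁻¹ := by rw [← h1, mul_one]
  -- s u u real part = ∑ normSq (repr u j)
  have hsvv : ∀ u : V, (s u u).re = ∑ j, Complex.normSq (B.repr u j) := by
    intro u
    have : s u u = ∑ j, (Complex.normSq (B.repr u j) : ℂ) := by
      rw [hexp u u]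
      refine Finset.sum_congr rfl fun j _ => ?_
      rw [hs_conj (φ j) u, hco u j, Complex.mul_conj]
    rw [this]
    push_cast [Complex.re_sum]
    simp
  -- a v v real part
  have havv : (a v v).re = ∑ j, Complex.normSq (B.repr v j) * (lam j)⁻¹ := by
    have : a v v = ((∑ j, Complex.normSq (B.repr v j) * (lam j)⁻¹ : ℝ) : ℂ) := by
      rw [haexp v v, Complex.ofReal_sum]
      refine Finset.sum_congr rfl fun j _ => ?_
      rw [ha_conj (φ j) v, haexp v (φ j)]
      rw [Finset.sum_eq_single j]
      · rw [haφ j, map_mul, Complex.conj_ofReal, ← mul_assoc, Complex.mul_conj]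
        push_cast
        ring
      · intro k _ hk
        rw [(horth k j hk).2, mul_zero]
      · simp
    rw [this]
    push_cast [Complex.re_sum]
    simp
  -- coefficients of π v
  have hd : ∀ j : Fin n, B.repr (π v) j = if (j : ℕ) < l then B.repr v j else 0 := by
    intro j
    by_cases hj : (j : ℕ) < l
    · rw [if_pos hj]
      have h0 := hπorth v j hj
      have hsub : s (v - π v) (φ j) = s v (φ j) - s (π v) (φ j) := by
        have : v - π v = v + (-1 : ℂ) • π v := by
          rw [neg_one_smul]; abel
        rw [this, hs_add, hs_smul]; ring
      rw [hsub] at h0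
      rw [← hco v j, ← hco (π v) j]
      exact (sub_eq_zero.mp h0).symm
    · rw [if_neg hj]
      have hmem := hπmem v
      rw [← hB] at hmem
      have := (B.mem_span_image.mp hmem)
      by_contra hne
      have : j ∈ ({j : Fin n | (j : ℕ) < l} : Set (Fin n)) :=
        this (Finsupp.mem_support_iff.mpr hne)
      exact hj this
  -- final inequality
  rw [hsvv v, hsvv (π v), havv]
  have hπre : ∑ j, Complex.normSq (B.repr (π v) j)
      = ∑ j : Fin n, (if (j : ℕ) < l then Complex.normSq (B.repr v j) else 0) := by
    refine Finset.sum_congr rfl fun j _ => ?_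
    rw [hd j]
    split <;> simp
  rw [hπre, Finset.mul_sum, Finset.mul_sum, ← Finset.sum_add_distrib]
  refine Finset.sum_le_sum fun j _ => ?_
  set x := Complex.normSq (B.repr v j) with hx
  have hx0 : 0 ≤ x := Complex.normSq_nonneg _
  have hlamj := hpos j
  have hL0 : (0:ℝ) < Lam := lt_trans one_pos hLam
  by_cases hj : (j : ℕ) < l
  · rw [if_pos hj]
    have : 0 ≤ 2 * Lam * (x * (lam j)⁻¹) := by positivity
    nlinarith
  · rw [if_neg hj]
    have hlj : lam j < Lam := hlt j (le_of_not_gt hj)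
    have : x * Lam⁻¹ ≤ x * (lam j)⁻¹ := by
      apply mul_le_mul_of_nonneg_left _ hx0
      exact inv_anti₀ hlamj hlj.le
    have h2 : 2 * Lam * (x * Lam⁻¹) = 2 * x := by field_simp
    nlinarith
end

section
/- Let V be a finite-dimensional complex inner product space, A : V → V a self-adjoint positive definite linear operator, and set a(u, v) := ⟪A u, v⟫. Let V_0, V_1, …, V_N be subspaces of V with V = V_0 + V_1 + … + V_N. For each i, let A_i : V_i → V_i be the (invertible) operator determined by ⟪A_i u, v⟫ = ⟪A u, v⟫ for all u, v ∈ V_i, let ι_i : V_i → V be the inclusion and ι_i^* its adjoint, and define B⁻¹ := Σ_{i=0}^{N} ι_i ∘ A_i^{-1} ∘ ι_i^*. Assume: (i) there is a constant C_1 > 0 such that every u ∈ V admits a decomposition u = Σ_{i=0}^{N} u_i with u_i ∈ V_i and Σ_{i=0}^{N} a(u_i, u_i) ≤ C_1 · a(u, u); (ii) there are a natural number M ≥ 1 and sets S(i) ⊆ {1, …, N} with i ∈ S(i), symmetric membership, |S(i)| ≤ M, and a(v_i, v_j) = 0 whenever i, j ∈ {1, …, N}, j ∉ S(i), v_i ∈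 V_i, v_j ∈ V_j. Then every eigenvalue μ of the operator B⁻¹ ∘ A is a real number satisfying C_1^{-1} ≤ μ ≤ 2M; in particular the condition number κ(B⁻¹A), defined as the ratio of the largest to the smallest eigenvalue of B⁻¹A, satisfies κ(B⁻¹A) ≤ 2M · C_1. -/
open scoped InnerProductSpace

set_option maxHeartbeats 1000000

lemma form_cs {V : Type*} [NormedAddCommGroup V] [InnerProductSpace ℂ V]
    (A : V →ₗ[ℂ] V)
    (hAsa : ∀ u v : V, ⟪A u, v⟫_ℂ = ⟪u, A v⟫_ℂ)
    (hpos : ∀ v : V, 0 ≤ (⟪A v, v⟫_ℂ).re) (u v : V) :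
    ‖⟪A u, v⟫_ℂ‖ ≤ Real.sqrt (⟪A u, u⟫_ℂ).re * Real.sqrt (⟪A v, v⟫_ℂ).re := by
  have hherm : ∀ x y : V, ⟪A y, x⟫_ℂ = starRingEnd ℂ ⟪A x, y⟫_ℂ := by
    intro x y
    rw [hAsa y x, ← inner_conj_symm]
  letI c : PreInnerProductSpace.Core ℂ V :=
    { inner := fun x y => ⟪A x, y⟫_ℂ
      conj_inner_symm := fun x y => (hherm y x).symm
      re_inner_nonneg := hpos
      add_left := fun x y z => by simp [map_add, inner_add_left]
      smul_left := fun x y r => by simp [map_smul, inner_smul_left]; ring}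
  have h : ‖⟪A u, v⟫_ℂ‖ * ‖⟪A v, u⟫_ℂ‖ ≤ (⟪A u, u⟫_ℂ).re * (⟪A v, v⟫_ℂ).re :=
    InnerProductSpace.Core.inner_mul_inner_self_le (𝕜 := ℂ) (F := V) u v
  rw [hherm u v, RCLike.norm_conj] at h
  have h2 : ‖⟪A u, v⟫_ℂ‖ = Real.sqrt (‖⟪A u, v⟫_ℂ‖ * ‖⟪A u, v⟫_ℂ‖) :=
    (Real.sqrt_mul_self (norm_nonneg _)).symm
  rw [h2, ← Real.sqrt_mul (hpos u)]
  exact Real.sqrt_le_sqrt h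

lemma re_le_norm' (z : ℂ) : z.re ≤ ‖z‖ := by
  exact Complex.re_le_norm z

/-- The two-level overlapping Schwarz preconditioner
`B⁻¹ = Σ_{i=0}^N ι_i ∘ A_i⁻¹ ∘ ι_i^*` built from the (given) inverses of the local
operators on the subspaces `V_0, V_1, …, V_N` (formula (2.24)/(2.30) of the paper). -/
noncomputable def schwarzPrecond {V : Type*} [NormedAddCommGroup V]
    [InnerProductSpace ℂ V] [FiniteDimensional ℂ V] {N : ℕ}
    (Vs : Fin (N + 1) → Submodule ℂ V)
    (AiInv : ∀ i, (Vs i) →ₗ[ℂ] (Vs i)) : V →ₗ[ℂ] V :=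
  ∑ i, (Vs i).subtype ∘ₗ (AiInv i) ∘ₗ LinearMap.adjoint (Vs i).subtype

/-- Theorem 2.7 of the paper, made quantitative: under the stable-decomposition
hypothesis (with constant `C₁`) and the bounded-overlap hypothesis (with constant
`M`), every eigenvalue `μ` of `B⁻¹A` is real with `C₁⁻¹ ≤ μ ≤ 2M`; in particular
the condition number satisfies `κ(B⁻¹A) ≤ 2M·C₁`. -/
theorem schwarz_eigenvalue_bounds
    {V : Type*} [NormedAddCommGroup V] [InnerProductSpace ℂ V] [FiniteDimensional ℂ V]
    (A : V →ₗ[ℂ] V)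
    (hAsa : ∀ u v : V, ⟪A u, v⟫_ℂ = ⟪u, A v⟫_ℂ)
    (hApd : ∀ v : V, v ≠ 0 → 0 < (⟪A v, v⟫_ℂ).re)
    (N : ℕ) (hN : 1 ≤ N)
    (Vs : Fin (N + 1) → Submodule ℂ V)
    (hsum : (⨆ i, Vs i) = ⊤)
    (Ai : ∀ i, (Vs i) →ₗ[ℂ] (Vs i))
    (hAi : ∀ (i : Fin (N + 1)) (u v : Vs i), ⟪Ai i u, v⟫_ℂ = ⟪A (u : V), (v : V)⟫_ℂ)
    (AiInv : ∀ i, (Vs i) →ₗ[ℂ] (Vs i))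
    (hAiInv : ∀ i, (Ai i) ∘ₗ (AiInv i) = LinearMap.id ∧ (AiInv i) ∘ₗ (Ai i) = LinearMap.id)
    (C₁ : ℝ) (hC₁ : 0 < C₁)
    (hdecomp : ∀ u : V, ∃ w : Fin (N + 1) → V,
      (∀ i, w i ∈ Vs i) ∧ u = ∑ i, w i ∧
      ∑ i, (⟪A (w i), w i⟫_ℂ).re ≤ C₁ * (⟪A u, u⟫_ℂ).re)
    (M : ℕ) (hM : 1 ≤ M)
    (S : Fin N → Finset (Fin N))
    (hSmem : ∀ i : Fin N, i ∈ S i)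
    (hSsymm : ∀ i j : Fin N, j ∈ S i ↔ i ∈ S j)
    (hScard : ∀ i : Fin N, (S i).card ≤ M)
    (horth : ∀ i j : Fin N, j ∉ S i →
      ∀ vi ∈ Vs i.succ, ∀ vj ∈ Vs j.succ, ⟪A vi, vj⟫_ℂ = 0) :
    (∀ μ : ℂ, Module.End.HasEigenvalue ((schwarzPrecond Vs AiInv) ∘ₗ A) μ →
        μ.im = 0 ∧ C₁⁻¹ ≤ μ.re ∧ μ.re ≤ 2 * M) ∧
    (∀ μ₁ μ₂ : ℂ, Module.End.HasEigenvalue ((schwarzPrecond Vs AiInv) ∘ₗ A) μ₁ →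
        Module.End.HasEigenvalue ((schwarzPrecond Vs AiInv) ∘ₗ A) μ₂ →
        μ₁.re ≤ 2 * M * C₁ * μ₂.re) := by
  classical
  have hMpos : (1:ℝ) ≤ (M:ℝ) := by exact_mod_cast hM
  have hpos : ∀ v : V, 0 ≤ (⟪A v, v⟫_ℂ).re := by
    intro v
    rcases eq_or_ne v 0 with h | h
    · simp [h]
    · exact (hApd v h).le
  have hherm : ∀ x y : V, ⟪A y, x⟫_ℂ = starRingEnd ℂ ⟪A x, y⟫_ℂ := by
    intro x y
    rw [hAsa y x, ← inner_conj_symm]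
  have hcs := form_cs A hAsa hpos
  set q : V → ℝ := fun v => (⟪A v, v⟫_ℂ).re with hq
  have him : ∀ v : V, (⟪A v, v⟫_ℂ).im = 0 := by
    intro v
    have h2 := congrArg Complex.im (hherm v v)
    simp only [Complex.conj_im] at h2
    linarith
  have hreal : ∀ v : V, ⟪A v, v⟫_ℂ = ((q v : ℝ) : ℂ) := by
    intro v
    exact Complex.ext (by simp [hq]) (by simp [him v])
  set P : Fin (N + 1) → V →ₗ[ℂ] V :=
    fun i => (Vs i).subtype ∘ₗ (AiInv i) ∘ₗ (LinearMap.adjoint (Vs i).subtype) ∘ₗ A with hPdef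
  have hT : ∀ u : V, (schwarzPrecond Vs AiInv ∘ₗ A) u = ∑ i, P i u := by
    intro u
    simp [schwarzPrecond, LinearMap.sum_apply, hPdef]
  have hPmem : ∀ (i : Fin (N+1)) (u : V), P i u ∈ Vs i := by
    intro i u
    exact SetLike.coe_mem _
  have hK1 : ∀ (i : Fin (N+1)) (u : V) (v : Vs i),
      ⟪A (P i u), (v : V)⟫_ℂ = ⟪A u, (v : V)⟫_ℂ := by
    intro i u v
    have h1 : P i u = ((AiInv i (LinearMap.adjoint (Vs i).subtype (A u)) : Vs i) : V) := rfl
    rw [h1, ← hAi i _ v]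
    have h2 : Ai i (AiInv i (LinearMap.adjoint (Vs i).subtype (A u)))
        = LinearMap.adjoint (Vs i).subtype (A u) :=
      LinearMap.congr_fun (hAiInv i).1 _
    rw [h2, LinearMap.adjoint_inner_left]
    rfl
  have key : ∀ μ : ℂ, Module.End.HasEigenvalue ((schwarzPrecond Vs AiInv) ∘ₗ A) μ →
      μ.im = 0 ∧ C₁⁻¹ ≤ μ.re ∧ μ.re ≤ 2 * M := by
    intro μ hμ
    obtain ⟨u, hev⟩ := hμ.exists_hasEigenvector
    have hu0 : u ≠ 0 := hev.right
    have hTu : (schwarzPrecond Vs AiInv ∘ₗ A) u = μ • u := hev.apply_eq_smul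
    have hr : 0 < q u := hApd u hu0
    set s : ℝ := ∑ i, q (P i u) with hs
    have hs_nonneg : 0 ≤ s := Finset.sum_nonneg fun i _ => hpos _
    have hqP : ∀ i, ⟪A u, P i u⟫_ℂ = ((q (P i u) : ℝ) : ℂ) := by
      intro i
      rw [← hK1 i u ⟨P i u, hPmem i u⟩]
      exact hreal _
    have hsum0 : μ * ((q u : ℝ) : ℂ) = ((s : ℝ) : ℂ) := by
      have h1 : ⟪A u, (schwarzPrecond Vs AiInv ∘ₗ A) u⟫_ℂ = μ * ((q u : ℝ):ℂ) := by
        rw [hTu, inner_smul_right, hreal]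
      have h2 : ⟪A u, (schwarzPrecond Vs AiInv ∘ₗ A) u⟫_ℂ = ((s:ℝ):ℂ) := by
        rw [hT u, inner_sum, hs]
        push_cast
        exact Finset.sum_congr rfl fun i _ => hqP i
      rw [← h1, h2]
    have him0 : μ.im = 0 := by
      have h3 := congrArg Complex.im hsum0
      simp only [Complex.mul_im, Complex.ofReal_im, Complex.ofReal_re, mul_zero,
        zero_add] at h3
      rcases mul_eq_zero.1 h3 with h | h
      · exact h
      · exact absurd h hr.ne'
    have hre0 : μ.re * q u = s := by
      have h3 := congrArg Complex.re hsum0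
      simpa [Complex.mul_re] using h3
    -- lower bound
    obtain ⟨w, hwmem, hwsum, hwbound⟩ := hdecomp u
    have hwbound' : ∑ i, q (w i) ≤ C₁ * q u := hwbound
    have hqu_le : q u ≤ C₁ * s := by
      have h1 : ⟪A u, u⟫_ℂ = ∑ i, ⟪A (P i u), w i⟫_ℂ := by
        have h0 : ⟪A u, u⟫_ℂ = ∑ i, ⟪A u, w i⟫_ℂ := by
          rw [← inner_sum, ← hwsum]
        rw [h0]
        exact Finset.sum_congr rfl fun i _ => (hK1 i u ⟨w i, hwmem i⟩).symm
      have h2 : q u ≤ ∑ i, Real.sqrt (q (P i u)) * Real.sqrt (q (w i)) := by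
        have h2a : q u = ∑ i, (⟪A (P i u), w i⟫_ℂ).re := by
          have := congrArg Complex.re h1
          rwa [Complex.re_sum] at this
        rw [h2a]
        refine Finset.sum_le_sum fun i _ => ?_
        exact (re_le_norm' _).trans (hcs (P i u) (w i))
      have h3 : (q u)^2 ≤ s * (∑ i, q (w i)) := by
        calc (q u)^2 ≤ (∑ i, Real.sqrt (q (P i u)) * Real.sqrt (q (w i)))^2 := by
              apply pow_le_pow_left₀ hr.le h2
          _ ≤ (∑ i, (Real.sqrt (q (P i u)))^2) * (∑ i, (Real.sqrt (q (w i)))^2) :=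
              Finset.sum_mul_sq_le_sq_mul_sq _ _ _
          _ = s * (∑ i, q (w i)) := by
              rw [hs]
              congr 1 <;> exact Finset.sum_congr rfl fun i _ => Real.sq_sqrt (hpos _)
      have h4 : (q u)^2 ≤ s * (C₁ * q u) :=
        h3.trans (mul_le_mul_of_nonneg_left hwbound' hs_nonneg)
      nlinarith [h4, hr]
    have hlow : C₁⁻¹ ≤ μ.re := by
      have h1le : 1 ≤ C₁ * μ.re := by nlinarith [hqu_le, hre0, hr]
      calc C₁⁻¹ = C₁⁻¹ * 1 := by ring
        _ ≤ C₁⁻¹ * (C₁ * μ.re) :=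
            mul_le_mul_of_nonneg_left h1le (inv_nonneg.2 hC₁.le)
        _ = μ.re := by field_simp
    -- upper bound
    have hP0 : q (P 0 u) ≤ q u := by
      have h1 : q (P 0 u) ≤ Real.sqrt (q u) * Real.sqrt (q (P 0 u)) := by
        have h2 : (⟪A u, P 0 u⟫_ℂ).re = q (P 0 u) := by rw [hqP 0, Complex.ofReal_re]
        calc q (P 0 u) = (⟪A u, P 0 u⟫_ℂ).re := h2.symm
          _ ≤ ‖⟪A u, P 0 u⟫_ℂ‖ := re_le_norm' _
          _ ≤ _ := hcs u (P 0 u)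
      nlinarith [Real.sq_sqrt (hpos (P 0 u)), Real.sq_sqrt (hpos u),
        Real.sqrt_nonneg (q u), Real.sqrt_nonneg (q (P 0 u)),
        sq_nonneg (Real.sqrt (q u) - Real.sqrt (q (P 0 u))), h1]
    set vv : Fin N → V := fun i => P i.succ u with hvv
    set t : ℝ := ∑ i : Fin N, q (vv i) with ht
    have ht_nonneg : 0 ≤ t := Finset.sum_nonneg fun i _ => hpos _
    have hst : s = q (P 0 u) + t := by rw [hs, Fin.sum_univ_succ]
    set wv : V := ∑ i : Fin N, vv i with hwv
    have hqwv : q wv ≤ M * t := by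
      have hexp : (⟪A wv, wv⟫_ℂ) = ∑ i : Fin N, ∑ j ∈ S i, ⟪A (vv i), vv j⟫_ℂ := by
        rw [hwv, map_sum, sum_inner]
        refine Finset.sum_congr rfl fun i _ => ?_
        rw [inner_sum]
        symm
        apply Finset.sum_subset (Finset.subset_univ _)
        intro j _ hj
        exact horth i j hj (vv i) (hPmem _ u) (vv j) (hPmem _ u)
      have h1 : q wv ≤ ∑ i : Fin N, ∑ j ∈ S i, (q (vv i) + q (vv j))/2 := by
        have h1a : q wv = ∑ i : Fin N, ∑ j ∈ S i, (⟪A (vv i), vv j⟫_ℂ).re := by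
          have := congrArg Complex.re hexp
          simpa [Complex.re_sum] using this
        rw [h1a]
        refine Finset.sum_le_sum fun i _ => Finset.sum_le_sum fun j _ => ?_
        have hb := (re_le_norm' _).trans (hcs (vv i) (vv j))
        nlinarith [Real.sq_sqrt (hpos (vv i)), Real.sq_sqrt (hpos (vv j)),
          sq_nonneg (Real.sqrt (q (vv i)) - Real.sqrt (q (vv j))), hb]
      have h2 : ∑ i : Fin N, ∑ _j ∈ S i, q (vv i) ≤ M * t := by
        calc ∑ i : Fin N, ∑ _j ∈ S i, q (vv i)
            = ∑ i : Fin N, ((S i).card : ℝ) * q (vv i) := by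
              simp [Finset.sum_const, nsmul_eq_mul]
          _ ≤ ∑ i : Fin N, (M : ℝ) * q (vv i) := by
              refine Finset.sum_le_sum fun i _ => ?_
              exact mul_le_mul_of_nonneg_right (by exact_mod_cast hScard i) (hpos _)
          _ = M * t := by rw [ht, Finset.mul_sum]
      have h3 : ∑ i : Fin N, ∑ j ∈ S i, q (vv j) ≤ M * t := by
        have hcomm : ∑ i : Fin N, ∑ j ∈ S i, q (vv j)
            = ∑ j : Fin N, ∑ _i ∈ S j, q (vv j) :=
          Finset.sum_comm' (s := Finset.univ) (t := S) (t' := Finset.univ) (s' := S)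
            (fun x y => ⟨fun h => ⟨(hSsymm x y).1 h.2, Finset.mem_univ _⟩,
              fun h => ⟨Finset.mem_univ _, (hSsymm x y).2 h.1⟩⟩)
        rw [hcomm]
        calc ∑ j : Fin N, ∑ _i ∈ S j, q (vv j)
            = ∑ j : Fin N, ((S j).card : ℝ) * q (vv j) := by
              simp [Finset.sum_const, nsmul_eq_mul]
          _ ≤ ∑ j : Fin N, (M : ℝ) * q (vv j) := by
              refine Finset.sum_le_sum fun j _ => ?_
              exact mul_le_mul_of_nonneg_right (by exact_mod_cast hScard j) (hpos _)
          _ = M * t := by rw [ht, Finset.mul_sum]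
      have h4 : ∑ i : Fin N, ∑ j ∈ S i, (q (vv i) + q (vv j))/2
          = ((∑ i : Fin N, ∑ _j ∈ S i, q (vv i)) + ∑ i : Fin N, ∑ j ∈ S i, q (vv j))/2 := by
        simp only [← Finset.sum_add_distrib, Finset.sum_div]
      linarith [h1, h2, h3, h4.le, h4.ge]
    have ht_le : t ≤ M * q u := by
      have h4 : t ≤ Real.sqrt (q u) * Real.sqrt (q wv) := by
        have h5 : ⟪A u, wv⟫_ℂ = ((t:ℝ):ℂ) := by
          rw [hwv, inner_sum, ht]
          push_cast
          exact Finset.sum_congr rfl fun i _ => hqP i.succ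
        calc t = (⟪A u, wv⟫_ℂ).re := by rw [h5, Complex.ofReal_re]
          _ ≤ ‖⟪A u, wv⟫_ℂ‖ := re_le_norm' _
          _ ≤ _ := hcs u wv
      have h6 : t^2 ≤ q u * q wv := by
        nlinarith [ht_nonneg, Real.sq_sqrt (hpos u), Real.sq_sqrt (hpos wv),
          Real.sqrt_nonneg (q u), Real.sqrt_nonneg (q wv), h4]
      have h7 : t^2 ≤ q u * ((M:ℝ) * t) :=
        h6.trans (mul_le_mul_of_nonneg_left hqwv hr.le)
      have hMr : 0 < (M:ℝ) * q u := mul_pos (lt_of_lt_of_le one_pos hMpos) hr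
      nlinarith [h7, sq_nonneg ((M:ℝ) * q u - t), hMr]
    have hupp : μ.re ≤ 2 * M := by
      have hsle : s ≤ 2 * M * q u := by
        rw [hst]
        nlinarith [hP0, ht_le, hr, hMpos]
      nlinarith [hre0, hr, hsle]
    exact ⟨him0, hlow, hupp⟩
  refine ⟨key, fun μ₁ μ₂ h₁ h₂ => ?_⟩
  obtain ⟨_, _, hu1⟩ := key μ₁ h₁
  obtain ⟨_, hl2, _⟩ := key μ₂ h₂
  calc μ₁.re ≤ 2 * M := hu1
    _ = 2 * M * C₁ * C₁⁻¹ := by field_simp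
    _ ≤ 2 * M * C₁ * μ₂.re := by
        apply mul_le_mul_of_nonneg_left hl2
        exact mul_nonneg (mul_nonneg (by norm_num) (Nat.cast_nonneg M)) hC₁.le
end

section
/- With the generalized eigenbasis setup and π the s-orthogonal projection onto span{φ_1, …, φ_l}, let Ṽ := {v ∈ V : s(v, φ_j) = 0 for j = 1, …, l} and let V_0 be the a-orthogonal complement of Ṽ in V. For j = 1, …, l let ψ_j ∈ V be the unique element satisfying a(ψ_j, v) = s(φ_j, πv) for all v ∈ V. Then ψ_1, …, ψ_l form a basis of V_0. -/
open scoped ComplexConjugate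

namespace IsHermitianPD
variable {V : Type*} [AddCommGroup V] [Module ℂ V] {a : V → V → ℂ}

lemma zero_left (ha : IsHermitianPD a) (v : V) : a 0 v = 0 := by
  have h := ha.1 0 0 v
  rw [add_zero] at h
  exact left_eq_add.mp h

lemma neg_left (ha : IsHermitianPD a) (u v : V) : a (-u) v = - a u v := by
  rw [← neg_one_smul ℂ u, ha.2.1]; ring

lemma sub_left (ha : IsHermitianPD a) (u w v : V) : a (u - w) v = a u v - a w v := by
  rw [sub_eq_add_neg, ha.1, ha.neg_left, sub_eq_add_neg]

lemma add_right (ha : IsHermitianPD a) (u v w : V) : a u (v + w) = a u v + a u w := by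
  rw [ha.2.2.1 u (v + w), ha.1, map_add, ← ha.2.2.1, ← ha.2.2.1]

lemma smul_right (ha : IsHermitianPD a) (c : ℂ) (u v : V) : a u (c • v) = conj c * a u v := by
  rw [ha.2.2.1 u (c • v), ha.2.1, map_mul, ← ha.2.2.1]

lemma sum_left (ha : IsHermitianPD a) {ι : Type*} (t : Finset ι) (f : ι → V) (v : V) :
    a (∑ i ∈ t, f i) v = ∑ i ∈ t, a (f i) v := by
  induction t using Finset.cons_induction with
  | empty => simpa using ha.zero_left v
  | cons i t h ih => rw [Finset.sum_cons, ha.1, ih, Finset.sum_cons]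

lemma sum_right (ha : IsHermitianPD a) {ι : Type*} (t : Finset ι) (f : ι → V) (v : V) :
    a v (∑ i ∈ t, f i) = ∑ i ∈ t, a v (f i) := by
  rw [ha.2.2.1, ha.sum_left, map_sum]
  exact Finset.sum_congr rfl fun i _ => (ha.2.2.1 v (f i)).symm

lemma eq_zero_of_self (ha : IsHermitianPD a) {v : V} (h : a v v = 0) : v = 0 := by
  by_contra hv
  have h2 := ha.2.2.2 v hv
  rw [h] at h2; simp at h2

lemma ext_left (ha : IsHermitianPD a) {u w : V} (h : ∀ v, a u v = a w v) : u = w := by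
  have h0 : a (u - w) (u - w) = 0 := by rw [ha.sub_left, h]; ring
  have h1 := ha.eq_zero_of_self h0
  rwa [sub_eq_zero] at h1

end IsHermitianPD

/-- The coarse basis functions `ψ_j` defined by `a(ψ_j, v) = s(φ_j, πv)` (formula
(2.21) of the paper) form a basis of the coarse space `V_0`, the `a`-orthogonal
complement of `Ṽ = {v : s(v, φ_j) = 0, j ≤ l}`. -/
theorem psi_basis_of_coarse_space
    {V : Type*} [AddCommGroup V] [Module ℂ V] [FiniteDimensional ℂ V]
    (n : ℕ) (hn : 1 ≤ n) (hdim : Module.finrank ℂ V = n)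
    (a s : V → V → ℂ) (ha : IsHermitianPD a) (hs : IsHermitianPD s)
    (φ : Fin n → V) (lam : Fin n → ℝ)
    (hindep : LinearIndependent ℂ φ)
    (hspan : Submodule.span ℂ (Set.range φ) = ⊤)
    (hmono : ∀ j k : Fin n, j ≤ k → lam k ≤ lam j)
    (hpos : ∀ j : Fin n, 0 < lam j)
    (heig : ∀ (j : Fin n) (w : V), s (φ j) w = (lam j : ℂ) * a (φ j) w)
    (horth : ∀ j k : Fin n, j ≠ k → s (φ j) (φ k) = 0 ∧ a (φ j) (φ k) = 0)
    (hnorm : ∀ j : Fin n, s (φ j) (φ j) = 1)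
    (Lam : ℝ) (hLam : 1 < Lam)
    (l : ℕ) (hln : l ≤ n)
    (hge : ∀ j : Fin n, (j : ℕ) < l → Lam ≤ lam j)
    (hlt : ∀ j : Fin n, l ≤ (j : ℕ) → lam j < Lam)
    (π : V → V)
    (hπmem : ∀ v : V, π v ∈ Submodule.span ℂ (φ '' {j : Fin n | (j : ℕ) < l}))
    (hπorth : ∀ (v : V) (j : Fin n), (j : ℕ) < l → s (v - π v) (φ j) = 0)
    (ψ : Fin l → V)
    (hψ : ∀ (j : Fin l) (v : V), a (ψ j) v = s (φ (Fin.castLE hln j)) (π v)) :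
    LinearIndependent ℂ ψ ∧
    (Submodule.span ℂ (Set.range ψ) : Set V) =
      {u : V | ∀ w : V, (∀ j : Fin n, (j : ℕ) < l → s w (φ j) = 0) → a u w = 0} := by
  classical
  have hμ : ∀ j : Fin l, ((lam (Fin.castLE hln j) : ℂ)) ≠ 0 := fun j =>
    Complex.ofReal_ne_zero.mpr (hpos _).ne'
  -- Step A: ψ j = λ_j • φ_j
  have hψeq : ∀ j : Fin l, ψ j = (lam (Fin.castLE hln j) : ℂ) • φ (Fin.castLE hln j) := by
    intro j
    apply ha.ext_left
    intro v
    have hk : ((Fin.castLE hln j : Fin n) : ℕ) < l := j.isLt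
    have h1 : s (φ (Fin.castLE hln j)) (v - π v) = 0 := by
      rw [hs.2.2.1, hπorth v _ hk]; simp
    have h2 : s (φ (Fin.castLE hln j)) (π v) = s (φ (Fin.castLE hln j)) v := by
      have hv : π v + (v - π v) = v := by abel
      conv_rhs => rw [← hv]
      rw [hs.add_right, h1, add_zero]
    rw [hψ j v, h2, heig, ha.2.1]
  -- independence
  have hinj : Function.Injective (Fin.castLE hln) := Fin.castLE_injective hln
  have hindep' : LinearIndependent ℂ (fun j : Fin l => φ (Fin.castLE hln j)) :=
    hindep.comp _ hinj
  have hli : LinearIndependent ℂ ψ := by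
    have h := hindep'.units_smul (fun j => Units.mk0 ((lam (Fin.castLE hln j) : ℂ)) (hμ j))
    have heq : ψ = (fun j => Units.mk0 ((lam (Fin.castLE hln j) : ℂ)) (hμ j)) •
        (fun j : Fin l => φ (Fin.castLE hln j)) := by
      funext j
      simp [Pi.smul_apply', Units.smul_def, hψeq j]
    rw [heq]; exact h
  refine ⟨hli, ?_⟩
  -- span ψ = span of the first l φ's
  have hspan0 : Submodule.span ℂ (Set.range ψ) =
      Submodule.span ℂ (Set.range (fun j : Fin l => φ (Fin.castLE hln j))) := by
    apply le_antisymm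
    · rw [Submodule.span_le]
      rintro _ ⟨j, rfl⟩
      rw [hψeq j]
      exact Submodule.smul_mem _ _ (Submodule.subset_span ⟨j, rfl⟩)
    · rw [Submodule.span_le]
      rintro _ ⟨j, rfl⟩
      have h : φ (Fin.castLE hln j) = (lam (Fin.castLE hln j) : ℂ)⁻¹ • ψ j := by
        rw [hψeq j, smul_smul, inv_mul_cancel₀ (hμ j), one_smul]
      show φ (Fin.castLE hln j) ∈ _
      rw [h]
      exact Submodule.smul_mem _ _ (Submodule.subset_span ⟨j, rfl⟩)
  rw [hspan0]
  ext u
  simp only [SetLike.mem_coe, Set.mem_setOf_eq]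
  constructor
  · intro hu w hw
    induction hu using Submodule.span_induction with
    | mem x hx =>
        obtain ⟨j, rfl⟩ := hx
        have hk : ((Fin.castLE hln j : Fin n) : ℕ) < l := j.isLt
        have hsw : s (φ (Fin.castLE hln j)) w = 0 := by
          rw [hs.2.2.1, hw _ hk]; simp
        have h := (heig (Fin.castLE hln j) w).symm
        rw [hsw] at h
        rcases mul_eq_zero.mp h with h | h
        · exact absurd h (hμ j)
        · exact h
    | zero => exact ha.zero_left w
    | add x y hx hy ihx ihy => rw [ha.1, ihx, ihy, add_zero]
    | smul c x hx ihx => rw [ha.2.1, ihx, mul_zero]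
  · intro hu
    set B : Module.Basis (Fin n) ℂ V := Module.Basis.mk hindep hspan.ge with hB
    set c : Fin n → ℂ := fun j => B.repr u j with hc
    set T : Finset (Fin n) := Finset.univ.filter (fun j => ¬ (j : ℕ) < l) with hT
    set S : Finset (Fin n) := Finset.univ.filter (fun j : Fin n => (j : ℕ) < l) with hS
    set w : V := ∑ j ∈ T, c j • φ j with hwdef
    set p : V := ∑ j ∈ S, c j • φ j with hpdef
    have hTle : ∀ j ∈ T, l ≤ (j : ℕ) := by
      intro j hj
      have := (Finset.mem_filter.mp hj).2
      omega
    have hsum : p + w = u := by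
      rw [hpdef, hwdef, hS, hT, Finset.sum_filter_add_sum_filter_not]
      have h := B.sum_repr u
      simp only [Module.Basis.coe_mk, hB] at h ⊢
      exact h
    -- s w (φ k) = 0 for k < l
    have hswk : ∀ k : Fin n, (k : ℕ) < l → s w (φ k) = 0 := by
      intro k hk
      rw [hs.2.2.1]
      have h : s (φ k) w = 0 := by
        rw [hwdef, hs.sum_right]
        apply Finset.sum_eq_zero
        intro j hj
        have hkj : k ≠ j := by
          intro hkj; subst hkj
          exact absurd hk (by simpa using (hTle k hj))
        rw [hs.smul_right, (horth k j hkj).1, mul_zero]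
      rw [h]; simp
    have hauw : a u w = 0 := hu w hswk
    have haφw : ∀ k : Fin n, (k : ℕ) < l → a (φ k) w = 0 := by
      intro k hk
      rw [hwdef, ha.sum_right]
      apply Finset.sum_eq_zero
      intro j hj
      have hkj : k ≠ j := by
        intro hkj; subst hkj
        exact absurd hk (by simpa using (hTle k hj))
      rw [ha.smul_right, (horth k j hkj).2, mul_zero]
    have hapw : a p w = 0 := by
      rw [hpdef, ha.sum_left]
      apply Finset.sum_eq_zero
      intro j hj
      rw [ha.2.1, haφw j (Finset.mem_filter.mp hj).2, mul_zero]
    have haww : a w w = 0 := by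
      have h : a (p + w) w = a u w := by rw [hsum]
      rw [ha.1, hapw, zero_add, hauw] at h
      exact h
    have hw0 : w = 0 := ha.eq_zero_of_self haww
    have hup : u = p := by rw [← hsum, hw0, add_zero]
    rw [hup, hpdef]
    apply Submodule.sum_mem
    intro j hj
    have hjl : (j : ℕ) < l := (Finset.mem_filter.mp hj).2
    apply Submodule.smul_mem
    apply Submodule.subset_span
    exact ⟨⟨(j : ℕ), hjl⟩, rfl⟩
end

section
/- With the generalized eigenbasis setup and π the s-orthogonal projection onto span{φ_1, …, φ_l}, let Ṽ := {v ∈ V : s(v, φ_j) = 0 for j = 1, …, l}, let V_0 be the a-orthogonal complement of Ṽ in V, and define the sesquilinear form b(u, v) := a(u, v) + s(πu, πv) on V. For j = 1, …, l let ψ̄_j ∈ V be the unique element satisfying b(ψ̄_j, v) = s(φ_j, πv) for all v ∈ V. Then ψ̄_1, …, ψ̄_l form a basis of V_0. -/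
open scoped ComplexConjugate

/-- The coarse basis functions `ψ̄_j` defined by `b(ψ̄_j, v) = s(φ_j, πv)` with
`b(u,v) = a(u,v) + s(πu, πv)` (formulas (2.22)–(2.23) of the paper, the
construction of [Wang–Chung–Kim 2020]) form a basis of the coarse space `V_0`,
the `a`-orthogonal complement of `Ṽ = {v : s(v, φ_j) = 0, j ≤ l}`. -/
theorem psibar_basis_of_coarse_space
    {V : Type*} [AddCommGroup V] [Module ℂ V] [FiniteDimensional ℂ V]
    (n : ℕ) (hn : 1 ≤ n) (hdim : Module.finrank ℂ V = n)
    (a s : V → V → ℂ) (ha : IsHermitianPD a) (hs : IsHermitianPD s)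
    (φ : Fin n → V) (lam : Fin n → ℝ)
    (hindep : LinearIndependent ℂ φ)
    (hspan : Submodule.span ℂ (Set.range φ) = ⊤)
    (hmono : ∀ j k : Fin n, j ≤ k → lam k ≤ lam j)
    (hpos : ∀ j : Fin n, 0 < lam j)
    (heig : ∀ (j : Fin n) (w : V), s (φ j) w = (lam j : ℂ) * a (φ j) w)
    (horth : ∀ j k : Fin n, j ≠ k → s (φ j) (φ k) = 0 ∧ a (φ j) (φ k) = 0)
    (hnorm : ∀ j : Fin n, s (φ j) (φ j) = 1)
    (Lam : ℝ) (hLam : 1 < Lam)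
    (l : ℕ) (hln : l ≤ n)
    (hge : ∀ j : Fin n, (j : ℕ) < l → Lam ≤ lam j)
    (hlt : ∀ j : Fin n, l ≤ (j : ℕ) → lam j < Lam)
    (π : V → V)
    (hπmem : ∀ v : V, π v ∈ Submodule.span ℂ (φ '' {j : Fin n | (j : ℕ) < l}))
    (hπorth : ∀ (v : V) (j : Fin n), (j : ℕ) < l → s (v - π v) (φ j) = 0)
    (ψbar : Fin l → V)
    (hψbar : ∀ (j : Fin l) (v : V),
      a (ψbar j) v + s (π (ψbar j)) (π v) = s (φ (Fin.castLE hln j)) (π v)) :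
    LinearIndependent ℂ ψbar ∧
    (Submodule.span ℂ (Set.range ψbar) : Set V) =
      {u : V | ∀ w : V, (∀ j : Fin n, (j : ℕ) < l → s w (φ j) = 0) → a u w = 0} := by
  obtain ⟨haadd, hasmul, haherm, hapos⟩ := ha
  obtain ⟨hsadd, hssmul, hsherm, hspos⟩ := hs
  -- basic derived identities
  have ha0 : ∀ w : V, a 0 w = 0 := by
    intro w
    have := hasmul 0 0 w
    simpa using this
  have hs0 : ∀ w : V, s 0 w = 0 := by
    intro w
    have := hssmul 0 0 w
    simpa using this
  have ha0' : ∀ u : V, a u 0 = 0 := by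
    intro u; rw [haherm, ha0]; simp
  have hs0' : ∀ u : V, s u 0 = 0 := by
    intro u; rw [hsherm, hs0]; simp
  have hssub : ∀ u v w : V, s (u - v) w = s u w - s v w := by
    intro u v w
    have h1 : u - v = u + (-1 : ℂ) • v := by
      simp [sub_eq_add_neg]
    rw [h1, hsadd, hssmul]; ring
  have haadd2 : ∀ u v w : V, a u (v + w) = a u v + a u w := by
    intro u v w
    rw [haherm u (v + w), haadd, map_add, ← haherm, ← haherm]
  have hasmul2 : ∀ (c : ℂ) (u v : V), a u (c • v) = conj c * a u v := by
    intro c u v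
    rw [haherm u (c • v), hasmul, map_mul, ← haherm]
  have hsadd2 : ∀ u v w : V, s u (v + w) = s u v + s u w := by
    intro u v w
    rw [hsherm u (v + w), hsadd, map_add, ← hsherm, ← hsherm]
  have hssmul2 : ∀ (c : ℂ) (u v : V), s u (c • v) = conj c * s u v := by
    intro c u v
    rw [hsherm u (c • v), hssmul, map_mul, ← hsherm]
  -- delta relations
  have hsδ : ∀ j k : Fin n, s (φ j) (φ k) = if j = k then 1 else 0 := by
    intro j k
    by_cases h : j = k
    · subst h; simp [hnorm j]
    · simp [h, (horth j k h).1]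
  classical
  set S : Finset (Fin n) := Finset.univ.filter (fun j : Fin n => (j : ℕ) < l) with hS
  have hmemS : ∀ j : Fin n, j ∈ S ↔ (j : ℕ) < l := by
    intro j; simp [hS]
  -- the basic sum identity
  have hsum : ∀ j : Fin n, (j : ℕ) < l → ∑ k ∈ S, s (φ j) (φ k) • φ k = φ j := by
    intro j hj
    rw [Finset.sum_eq_single j]
    · rw [hnorm j]; simp
    · intro k hk hkj
      rw [hsδ, if_neg (fun h : j = k => hkj h.symm)]; simp
    · intro hj'
      exact absurd ((hmemS j).mpr hj) hj'
  -- representation of elements of the span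
  have hrep : ∀ x : V, x ∈ Submodule.span ℂ (φ '' {j : Fin n | (j : ℕ) < l}) →
      x = ∑ k ∈ S, s x (φ k) • φ k := by
    intro x hx
    induction hx using Submodule.span_induction with
    | mem x hx =>
        obtain ⟨j, hj, rfl⟩ := hx
        exact (hsum j hj).symm
    | zero => simp [hs0]
    | add x y hx hy ihx ihy =>
        calc x + y = (∑ k ∈ S, s x (φ k) • φ k) + (∑ k ∈ S, s y (φ k) • φ k) := by
              rw [← ihx, ← ihy]
          _ = ∑ k ∈ S, s (x + y) (φ k) • φ k := by
              rw [← Finset.sum_add_distrib]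
              exact Finset.sum_congr rfl fun k _ => by rw [hsadd, add_smul]
    | smul c x hx ih =>
        calc c • x = c • ∑ k ∈ S, s x (φ k) • φ k := by rw [← ih]
          _ = ∑ k ∈ S, s (c • x) (φ k) • φ k := by
              rw [Finset.smul_sum]
              exact Finset.sum_congr rfl fun k _ => by rw [hssmul, mul_smul]
  -- π's coefficients
  have hπcoef : ∀ (v : V) (k : Fin n), (k : ℕ) < l → s (π v) (φ k) = s v (φ k) := by
    intro v k hk
    have h0 := hπorth v k hk
    rw [hssub] at h0
    linear_combination -h0
  -- explicit formula for π
  have hπformula : ∀ v : V, π v = ∑ k ∈ S, s v (φ k) • φ k := by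
    intro v
    rw [hrep (π v) (hπmem v)]
    exact Finset.sum_congr rfl fun k hk => by rw [hπcoef v k ((hmemS k).mp hk)]
  have hπadd : ∀ u v : V, π (u + v) = π u + π v := by
    intro u v
    rw [hπformula, hπformula, hπformula, ← Finset.sum_add_distrib]
    exact Finset.sum_congr rfl fun k _ => by rw [hsadd, add_smul]
  have hπsmul : ∀ (c : ℂ) (v : V), π (c • v) = c • π v := by
    intro c v
    rw [hπformula, hπformula, Finset.smul_sum]
    exact Finset.sum_congr rfl fun k _ => by rw [hssmul, mul_smul]
  have hπzero : π 0 = 0 := by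
    rw [hπformula]; simp [hs0]
  have hπidem : ∀ v : V, π (π v) = π v := by
    intro v
    have h1 : ∑ k ∈ S, s (π v) (φ k) • φ k = ∑ k ∈ S, s v (φ k) • φ k :=
      Finset.sum_congr rfl fun k hk => by rw [hπcoef v k ((hmemS k).mp hk)]
    rw [hπformula (π v), h1, ← hπformula v]
  have hπphi : ∀ j : Fin n, (j : ℕ) < l → π (φ j) = φ j := by
    intro j hj
    rw [hπformula]; exact hsum j hj
  have hπann : ∀ w : V, (∀ j : Fin n, (j : ℕ) < l → s w (φ j) = 0) → π w = 0 := by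
    intro w hw
    rw [hπformula]
    refine Finset.sum_eq_zero fun k hk => ?_
    rw [hw k ((hmemS k).mp hk)]; simp
  -- the bilinear form b packaged as a family of linear maps in the first argument
  set F : V → V →ₗ[ℂ] ℂ := fun y =>
    { toFun := fun x => a x y + s (π x) (π y)
      map_add' := fun x x' => by
        show a (x + x') y + s (π (x + x')) (π y) =
          (a x y + s (π x) (π y)) + (a x' y + s (π x') (π y))
        rw [haadd, hπadd, hsadd]; ring
      map_smul' := fun c x => by
        simp only [RingHom.id_apply, smul_eq_mul]
        show a (c • x) y + s (π (c • x)) (π y) = c * (a x y + s (π x) (π y))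
        rw [hasmul, hπsmul, hssmul]; ring } with hFdef
  have hF : ∀ y x : V, F y x = a x y + s (π x) (π y) := fun _ _ => rfl
  have hFψ : ∀ (j : Fin l) (y : V), F y (ψbar j) = s (φ (Fin.castLE hln j)) (π y) := by
    intro j y
    rw [hF]; exact hψbar j y
  have hcastlt : ∀ j : Fin l, ((Fin.castLE hln j : Fin n) : ℕ) < l := by
    intro j
    simpa using j.isLt
  have hcastinj : ∀ j k : Fin l, Fin.castLE hln j = Fin.castLE hln k → j = k := by
    intro j k he
    have hv := congrArg Fin.val he
    simp only [Fin.coe_castLE] at hv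
    exact Fin.ext hv
  have hFψphi : ∀ (j : Fin l) (k : Fin n), (k : ℕ) < l →
      F (φ k) (ψbar j) = if Fin.castLE hln j = k then 1 else 0 := by
    intro j k hk
    rw [hFψ, hπphi k hk, hsδ]
  -- second-argument (conjugate-linear) rules for b
  have hFadd2 : ∀ x y z : V, F (y + z) x = F y x + F z x := by
    intro x y z
    rw [hF, hF, hF, haadd2, hπadd, hsadd2]; ring
  have hFsmul2 : ∀ (c : ℂ) (x y : V), F (c • y) x = conj c * F y x := by
    intro c x y
    rw [hF, hF, hasmul2, hπsmul, hssmul2]; ring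
  have hFzero2 : ∀ x : V, F 0 x = 0 := by
    intro x
    rw [hF, ha0', hπzero, hs0']; ring
  -- ψbar j is a-orthogonal to Ṽ
  have hψV0 : ∀ (j : Fin l) (w : V), (∀ k : Fin n, (k : ℕ) < l → s w (φ k) = 0) →
      a (ψbar j) w = 0 := by
    intro j w hw
    have h0 := hψbar j w
    rw [hπann w hw, hs0', hs0'] at h0
    linear_combination h0
  constructor
  · -- linear independence
    rw [Fintype.linearIndependent_iff]
    intro g hg i
    have h0 : F (φ (Fin.castLE hln i)) (∑ j, g j • ψbar j) = 0 := by
      rw [hg]; simp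
    rw [map_sum] at h0
    simp only [map_smul, smul_eq_mul] at h0
    have hterm : ∀ j : Fin l, g j * F (φ (Fin.castLE hln i)) (ψbar j) =
        if j = i then g j else 0 := by
      intro j
      rw [hFψphi j _ (hcastlt i)]
      by_cases h : j = i
      · subst h; simp
      · have hne : Fin.castLE hln j ≠ Fin.castLE hln i := fun he => h (hcastinj _ _ he)
        simp [hne, h]
    rw [Finset.sum_congr rfl fun j _ => hterm j] at h0
    simpa using h0
  · -- the span equals the coarse space
    apply Set.Subset.antisymm
    · intro u hu
      rw [SetLike.mem_coe] at hu
      simp only [Set.mem_setOf_eq]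
      intro w hw
      induction hu using Submodule.span_induction with
      | mem x hx =>
          obtain ⟨j, rfl⟩ := hx
          exact hψV0 j w hw
      | zero => exact ha0 w
      | add x y hx hy ihx ihy => rw [haadd, ihx, ihy]; ring
      | smul c x hx ih => rw [hasmul, ih]; ring
    · intro u hu
      simp only [Set.mem_setOf_eq] at hu
      set g : Fin l → ℂ := fun j => F (φ (Fin.castLE hln j)) u with hg
      have hgdef : ∀ j : Fin l, g j = F (φ (Fin.castLE hln j)) u := fun j => rfl
      set h : V := u - ∑ j, g j • ψbar j with hh
      -- b(h, φ k) = 0 for k < l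
      have step1 : ∀ k : Fin n, (k : ℕ) < l → F (φ k) h = 0 := by
        intro k hk
        rw [hh, map_sub, map_sum]
        have hsum2 : ∑ j, F (φ k) (g j • ψbar j) = g ⟨(k : ℕ), hk⟩ := by
          rw [Finset.sum_eq_single (⟨(k : ℕ), hk⟩ : Fin l)]
          · rw [map_smul, smul_eq_mul, hFψphi _ _ hk]
            have : Fin.castLE hln (⟨(k : ℕ), hk⟩ : Fin l) = k := Fin.ext rfl
            rw [if_pos this, mul_one]
          · intro j _ hj
            rw [map_smul, smul_eq_mul, hFψphi _ _ hk]
            have : Fin.castLE hln j ≠ k := by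
              intro he
              apply hj
              have hv := congrArg Fin.val he
              simp only [Fin.coe_castLE] at hv
              exact Fin.ext hv
            rw [if_neg this, mul_zero]
          · intro hmem
            exact absurd (Finset.mem_univ _) hmem
        rw [hsum2]
        have hcc : Fin.castLE hln (⟨(k : ℕ), hk⟩ : Fin l) = k := Fin.ext rfl
        have : F (φ k) u = g ⟨(k : ℕ), hk⟩ := by rw [hgdef, hcc]
        rw [this, sub_self]
      -- b(h, w) = 0 for w ∈ Ṽ
      have step2 : ∀ w : V, (∀ k : Fin n, (k : ℕ) < l → s w (φ k) = 0) → F w h = 0 := by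
        intro w hw
        have hπw : π w = 0 := hπann w hw
        rw [hh, map_sub, map_sum]
        have h1 : F w u = 0 := by
          rw [hF, hπw, hs0', hu w hw, add_zero]
        have h2 : ∀ j : Fin l, F w (g j • ψbar j) = 0 := by
          intro j
          rw [map_smul, smul_eq_mul, hFψ, hπw, hs0', mul_zero]
        rw [h1, Finset.sum_congr rfl fun j _ => h2 j]
        simp
      -- b(h, v) = 0 for all v
      have step3 : ∀ v : V, F v h = 0 := by
        intro v
        have hv : v = π v + (v - π v) := by abel
        have hπpart : ∀ x ∈ Submodule.span ℂ (φ '' {j : Fin n | (j : ℕ) < l}), F x h = 0 := by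
          intro x hx
          induction hx using Submodule.span_induction with
          | mem x hx =>
              obtain ⟨j, hj, rfl⟩ := hx
              exact step1 j hj
          | zero => exact hFzero2 h
          | add x y hx hy ihx ihy => rw [hFadd2, ihx, ihy]; ring
          | smul c x hx ih => rw [hFsmul2, ih]; ring
        have hrest : F (v - π v) h = 0 :=
          step2 (v - π v) (fun k hk => hπorth v k hk)
        calc F v h = F (π v + (v - π v)) h := by rw [← hv]
          _ = F (π v) h + F (v - π v) h := hFadd2 h (π v) (v - π v)
          _ = 0 := by rw [hπpart (π v) (hπmem v), hrest, add_zero]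
      -- positive definiteness of b forces h = 0
      have hzero : h = 0 := by
        by_contra hne
        have h1 : 0 < (a h h).re := hapos h hne
        have h2 : 0 ≤ (s (π h) (π h)).re := by
          by_cases hp : π h = 0
          · rw [hp, hs0]; simp
          · exact le_of_lt (hspos _ hp)
        have h3 := step3 h
        rw [hF] at h3
        have h4 : ((a h h + s (π h) (π h)).re : ℝ) = 0 := by rw [h3]; simp
        rw [Complex.add_re] at h4
        linarith
      have hu2 : u = ∑ j, g j • ψbar j := by
        have := sub_eq_zero.mp hzero
        exact this
      rw [SetLike.mem_coe, hu2]
      exact Submodule.sum_mem _ fun j _ =>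
        Submodule.smul_mem _ _ (Submodule.subset_span ⟨j, rfl⟩)
end

section
/- With the generalized eigenbasis setup, π the s-orthogonal projection onto span{φ_1, …, φ_l}, and b(u, v) := a(u, v) + s(πu, πv): for j = 1, …, l let ψ̄_j ∈ V satisfy b(ψ̄_j, v) = s(φ_j, πv) for all v ∈ V. Then for any complex coefficients c_1, …, c_l, setting w_Φ := Σ_{j=1}^{l} c_j φ_j and u := Σ_{j=1}^{l} c_j ψ̄_j, one has s(w_Φ, w_Φ) ≤ (1 + Λ^{-1}) · b(u, u). -/
open scoped ComplexConjugate

section Aux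
variable {V : Type*} [AddCommGroup V] [Module ℂ V] {a : V → V → ℂ}

lemma HPD.zero₁ (h : IsHermitianPD a) (w : V) : a 0 w = 0 := by
  have := h.2.1 0 0 w
  simpa using this

lemma HPD.add₂ (h : IsHermitianPD a) (u v w : V) : a u (v + w) = a u v + a u w := by
  rw [h.2.2.1 u (v + w), h.1, map_add, ← h.2.2.1, ← h.2.2.1]

lemma HPD.smul₂ (h : IsHermitianPD a) (c : ℂ) (u v : V) :
    a u (c • v) = conj c * a u v := by
  rw [h.2.2.1 u (c • v), h.2.1, map_mul, ← h.2.2.1]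

lemma HPD.neg₁ (h : IsHermitianPD a) (u w : V) : a (-u) w = -a u w := by
  have := h.2.1 (-1) u w
  simpa using this

lemma HPD.sub₁ (h : IsHermitianPD a) (u v w : V) : a (u - v) w = a u w - a v w := by
  rw [sub_eq_add_neg, h.1, HPD.neg₁ h, sub_eq_add_neg]

lemma HPD.sum₁ (h : IsHermitianPD a) {ι : Type*} (t : Finset ι) (f : ι → V) (w : V) :
    a (∑ i ∈ t, f i) w = ∑ i ∈ t, a (f i) w := by
  classical
  induction t using Finset.induction with
  | empty => simpa using HPD.zero₁ h w
  | insert _ _ hx ih => rename_i i t'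
                        rw [Finset.sum_insert hx, h.1, ih, Finset.sum_insert hx]

lemma HPD.sum₂ (h : IsHermitianPD a) {ι : Type*} (t : Finset ι) (f : ι → V) (w : V) :
    a w (∑ i ∈ t, f i) = ∑ i ∈ t, a w (f i) := by
  rw [h.2.2.1, HPD.sum₁ h, map_sum]
  exact Finset.sum_congr rfl fun i _ => (h.2.2.1 w (f i)).symm

lemma HPD.nonneg (h : IsHermitianPD a) (v : V) : 0 ≤ (a v v).re := by
  by_cases hv : v = 0
  · simp [hv, HPD.zero₁ h]
  · exact (h.2.2.2 v hv).le

/-- Cauchy–Schwarz (real-part version) for a positive semidefinite Hermitian form. -/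
lemma herm_cauchy_schwarz {b : V → V → ℂ}
    (hadd : ∀ u v w : V, b (u + v) w = b u w + b v w)
    (hsmul : ∀ (c : ℂ) (u v : V), b (c • u) v = c * b u v)
    (hherm : ∀ u v : V, b u v = conj (b v u))
    (hpos : ∀ v : V, 0 ≤ (b v v).re) (u w : V) :
    (b u w).re ^ 2 ≤ (b u u).re * (b w w).re := by
  have hb : IsHermitianPD b ∨ True := Or.inr trivial
  have hadd₂ : ∀ u v w : V, b u (v + w) = b u v + b u w := by
    intro u v w; rw [hherm u (v + w), hadd, map_add, ← hherm, ← hherm]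
  have hsmul₂ : ∀ (c : ℂ) (u v : V), b u (c • v) = conj c * b u v := by
    intro c u v; rw [hherm u (c • v), hsmul, map_mul, ← hherm]
  have key : ∀ t : ℝ, 0 ≤ (b w w).re * (t * t) + (2 * (b u w).re) * t + (b u u).re := by
    intro t
    have h0 := hpos (u + (t : ℂ) • w)
    have hexp : b (u + (t : ℂ) • w) (u + (t : ℂ) • w)
        = b u u + (t : ℂ) * b u w + (t : ℂ) * b w u + ((t * t : ℝ) : ℂ) * b w w := by
      rw [hadd, hadd₂, hadd₂, hsmul, hsmul₂, hsmul₂, hsmul, Complex.conj_ofReal]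
      push_cast
      ring
    rw [hexp] at h0
    simp only [Complex.add_re, Complex.re_ofReal_mul] at h0
    have hre : (b w u).re = (b u w).re := by
      rw [hherm u w]; simp
    rw [hre] at h0
    linarith
  have hd := discrim_le_zero key
  rw [discrim] at hd
  nlinarith [hd]

end Aux

/-- Inequality (2.61) in the proof of Lemma 2.12 of the paper (single-subdomain
version): for `w_Φ = Σ_j c_j φ_j` and `u = Σ_j c_j ψ̄_j`, one has
`s(w_Φ, w_Φ) ≤ (1 + Λ⁻¹) b(u, u)` where `b(u, v) = a(u, v) + s(πu, πv)`. -/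
theorem s_norm_wPhi_le_b_norm_u
    {V : Type*} [AddCommGroup V] [Module ℂ V] [FiniteDimensional ℂ V]
    (n : ℕ) (hn : 1 ≤ n) (hdim : Module.finrank ℂ V = n)
    (a s : V → V → ℂ) (ha : IsHermitianPD a) (hs : IsHermitianPD s)
    (φ : Fin n → V) (lam : Fin n → ℝ)
    (hindep : LinearIndependent ℂ φ)
    (hspan : Submodule.span ℂ (Set.range φ) = ⊤)
    (hmono : ∀ j k : Fin n, j ≤ k → lam k ≤ lam j)
    (hpos : ∀ j : Fin n, 0 < lam j)
    (heig : ∀ (j : Fin n) (w : V), s (φ j) w = (lam j : ℂ) * a (φ j) w)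
    (horth : ∀ j k : Fin n, j ≠ k → s (φ j) (φ k) = 0 ∧ a (φ j) (φ k) = 0)
    (hnorm : ∀ j : Fin n, s (φ j) (φ j) = 1)
    (Lam : ℝ) (hLam : 1 < Lam)
    (l : ℕ) (hln : l ≤ n)
    (hge : ∀ j : Fin n, (j : ℕ) < l → Lam ≤ lam j)
    (hlt : ∀ j : Fin n, l ≤ (j : ℕ) → lam j < Lam)
    (π : V → V)
    (hπmem : ∀ v : V, π v ∈ Submodule.span ℂ (φ '' {j : Fin n | (j : ℕ) < l}))
    (hπorth : ∀ (v : V) (j : Fin n), (j : ℕ) < l → s (v - π v) (φ j) = 0)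
    (ψbar : Fin l → V)
    (hψbar : ∀ (j : Fin l) (v : V),
      a (ψbar j) v + s (π (ψbar j)) (π v) = s (φ (Fin.castLE hln j)) (π v)) :
    ∀ c : Fin l → ℂ,
      (s (∑ j, c j • φ (Fin.castLE hln j)) (∑ j, c j • φ (Fin.castLE hln j))).re ≤
        (1 + Lam⁻¹) *
          ((a (∑ j, c j • ψbar j) (∑ j, c j • ψbar j)).re +
            (s (π (∑ j, c j • ψbar j)) (π (∑ j, c j • ψbar j))).re) := by
  intro c
  classical
  set m : Fin l → Fin n := Fin.castLE hln with hm
  set wΦ : V := ∑ j, c j • φ (m j) with hwΦ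
  set u : V := ∑ j, c j • ψbar j with hu
  have hminj : Function.Injective m := Fin.castLE_injective hln
  have hset : φ '' {j : Fin n | (j : ℕ) < l} = Set.range (fun k : Fin l => φ (m k)) := by
    ext x
    constructor
    · rintro ⟨j, hj, rfl⟩
      exact ⟨⟨(j : ℕ), hj⟩, by simp [hm, Fin.castLE]⟩
    · rintro ⟨k, rfl⟩
      exact ⟨m k, by simp [hm], rfl⟩
  have hπmem' : ∀ v : V, π v ∈ Submodule.span ℂ (Set.range fun k : Fin l => φ (m k)) := by
    intro v; rw [← hset]; exact hπmem v
  have hzero : ∀ x ∈ Submodule.span ℂ (Set.range fun k : Fin l => φ (m k)),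
      (∀ k : Fin l, s x (φ (m k)) = 0) → x = 0 := by
    intro x hx hxo
    obtain ⟨d, hd⟩ := (Submodule.mem_span_range_iff_exists_fun ℂ).1 hx
    have hdk : ∀ k : Fin l, d k = 0 := by
      intro k
      have hk := hxo k
      rw [← hd, HPD.sum₁ hs] at hk
      rw [Finset.sum_eq_single k ?_ ?_] at hk
      · rw [hs.2.1, hnorm] at hk; simpa using hk
      · intro j _ hjk
        rw [hs.2.1, (horth (m j) (m k) (fun h => hjk (hminj h))).1, mul_zero]
      · simp
    rw [← hd]
    simp [hdk]
  have hπuniq : ∀ (v y : V), y ∈ Submodule.span ℂ (Set.range fun k : Fin l => φ (m k)) →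
      (∀ k : Fin l, s (v - y) (φ (m k)) = 0) → π v = y := by
    intro v y hy hvy
    have hsub : π v - y = 0 := by
      apply hzero _ (Submodule.sub_mem _ (hπmem' v) hy)
      intro k
      have h1 : π v - y = (v - y) - (v - π v) := by abel
      rw [h1, HPD.sub₁ hs, hvy k, hπorth v (m k) (by simp [hm]), sub_zero]
    exact sub_eq_zero.1 hsub
  have hπwΦ : π wΦ = wΦ := by
    apply hπuniq
    · exact Submodule.sum_mem _ fun j _ =>
        Submodule.smul_mem _ _ (Submodule.subset_span ⟨j, rfl⟩)
    · intro k; rw [sub_self, HPD.zero₁ hs]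
  have hπadd : ∀ x y : V, π (x + y) = π x + π y := by
    intro x y
    apply hπuniq _ _ (Submodule.add_mem _ (hπmem' x) (hπmem' y))
    intro k
    have h1 : x + y - (π x + π y) = (x - π x) + (y - π y) := by abel
    rw [h1, hs.1, hπorth x _ (by simp [hm]), hπorth y _ (by simp [hm]), add_zero]
  have hπsmul : ∀ (cc : ℂ) (x : V), π (cc • x) = cc • π x := by
    intro cc x
    apply hπuniq _ _ (Submodule.smul_mem _ _ (hπmem' x))
    intro k
    have h1 : cc • x - cc • π x = cc • (x - π x) := (smul_sub cc x (π x)).symm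
    rw [h1, hs.2.1, hπorth x _ (by simp [hm]), mul_zero]
  let πL : V →ₗ[ℂ] V :=
    { toFun := π, map_add' := hπadd, map_smul' := hπsmul }
  have hπsum : π u = ∑ j, c j • π (ψbar j) := by
    show πL u = _
    rw [hu, map_sum]
    exact Finset.sum_congr rfl fun j _ => map_smul πL (c j) (ψbar j)
  have hbu : ∀ v : V, a u v + s (π u) (π v) = s wΦ (π v) := by
    intro v
    rw [hπsum, hu, hwΦ, HPD.sum₁ ha, HPD.sum₁ hs, HPD.sum₁ hs, ← Finset.sum_add_distrib]
    apply Finset.sum_congr rfl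
    intro j _
    rw [ha.2.1, hs.2.1, hs.2.1, ← mul_add, hψbar j v]
  set b : V → V → ℂ := fun x y => a x y + s (π x) (π y) with hb
  have hbadd : ∀ x y z : V, b (x + y) z = b x z + b y z := by
    intro x y z
    simp only [hb]
    rw [ha.1, hπadd, hs.1]
    ring
  have hbsmul : ∀ (cc : ℂ) (x y : V), b (cc • x) y = cc * b x y := by
    intro cc x y
    simp only [hb]
    rw [ha.2.1, hπsmul, hs.2.1]
    ring
  have hbherm : ∀ x y : V, b x y = conj (b y x) := by
    intro x y
    simp only [hb]
    rw [ha.2.2.1 x y, hs.2.2.1 (π x) (π y), map_add]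
  have hbpos : ∀ v : V, 0 ≤ (b v v).re := by
    intro v
    simp only [hb, Complex.add_re]
    exact add_nonneg (HPD.nonneg ha v) (HPD.nonneg hs (π v))
  have hcs := herm_cauchy_schwarz hbadd hbsmul hbherm hbpos u wΦ
  have hdiag : ∀ (f : V → V → ℂ), IsHermitianPD f →
      (∀ j k : Fin l, j ≠ k → f (φ (m j)) (φ (m k)) = 0) →
      f wΦ wΦ = ∑ j, (c j * conj (c j)) * f (φ (m j)) (φ (m j)) := by
    intro f hf horthf
    rw [hwΦ, HPD.sum₁ hf]
    apply Finset.sum_congr rfl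
    intro j _
    rw [hf.2.1, HPD.sum₂ hf]
    rw [Finset.sum_eq_single j ?_ ?_]
    · rw [HPD.smul₂ hf]; ring
    · intro k _ hkj
      rw [HPD.smul₂ hf, horthf j k (fun h => hkj h.symm), mul_zero]
    · simp
  have hsdiag : (s wΦ wΦ).re = ∑ j, Complex.normSq (c j) := by
    rw [hdiag s hs (fun j k hjk => (horth _ _ (fun h => hjk (hminj h))).1)]
    rw [Complex.re_sum]
    apply Finset.sum_congr rfl
    intro j _
    rw [hnorm, mul_one, Complex.mul_conj, Complex.ofReal_re]
  have haval : ∀ j : Fin l, a (φ (m j)) (φ (m j)) = (((lam (m j))⁻¹ : ℝ) : ℂ) := by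
    intro j
    have h1 := heig (m j) (φ (m j))
    rw [hnorm] at h1
    rw [Complex.ofReal_inv]
    exact eq_inv_of_mul_eq_one_right h1.symm
  have hadiag : (a wΦ wΦ).re = ∑ j, Complex.normSq (c j) * (lam (m j))⁻¹ := by
    rw [hdiag a ha (fun j k hjk => (horth _ _ (fun h => hjk (hminj h))).2)]
    rw [Complex.re_sum]
    apply Finset.sum_congr rfl
    intro j _
    rw [haval j, Complex.mul_conj, ← Complex.ofReal_mul, Complex.ofReal_re]
  have hAle : (a wΦ wΦ).re ≤ Lam⁻¹ * (s wΦ wΦ).re := by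
    rw [hadiag, hsdiag, Finset.mul_sum]
    apply Finset.sum_le_sum
    intro j _
    have h1 : Lam ≤ lam (m j) := hge (m j) (by simp [hm])
    have h2 : (lam (m j))⁻¹ ≤ Lam⁻¹ := by
      apply inv_anti₀ (by linarith) h1
    have h3 := Complex.normSq_nonneg (c j)
    nlinarith
  have hSnn : 0 ≤ (s wΦ wΦ).re := by
    rw [hsdiag]
    exact Finset.sum_nonneg fun j _ => Complex.normSq_nonneg _
  have hbuw : (b u wΦ).re = (s wΦ wΦ).re := by
    have h1 : b u wΦ = s wΦ (π wΦ) := hbu wΦ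
    rw [h1, hπwΦ]
  have hbuu : (b u u).re = (a u u).re + (s (π u) (π u)).re := by
    simp only [hb, Complex.add_re]
  have hbww : (b wΦ wΦ).re = (a wΦ wΦ).re + (s wΦ wΦ).re := by
    simp only [hb, hπwΦ, Complex.add_re]
  have hApos : 0 ≤ (a u u).re + (s (π u) (π u)).re := by
    rw [← hbuu]; exact hbpos u
  rw [hbuw, hbuu, hbww] at hcs
  have hLinv : 0 < Lam⁻¹ := inv_pos.2 (by linarith)
  rcases eq_or_lt_of_le hSnn with hS0 | hSpos
  · rw [← hS0]
    exact mul_nonneg (by linarith) hApos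
  · have hkey : (s wΦ wΦ).re * (s wΦ wΦ).re ≤
        ((1 + Lam⁻¹) * ((a u u).re + (s (π u) (π u)).re)) * (s wΦ wΦ).re := by
      nlinarith
    exact le_of_mul_le_mul_right hkey hSpos
end
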